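/- Let ω be a non-periodic Toeplitz sequence over a finite alphabet with weak periodic structure (p_ℓ) and densities D(p) := #(Per(p,ω) ∩ [0,p−1])/p. If x, y ∈ Σ_ω have the same p_{ℓ+1}-skeleton (i.e. Per(p_{ℓ+1},x) = Per(p_{ℓ+1},y) and x_k = y_k for all k in this set), then limsup_{n→∞} (1/n)·#{0 ≤ k < n : x_k ≠ y_k} ≤ 1 − D(p_{ℓ+1}). -/

import Mathlib

open Filter

/-- The left shift on one-sided sequences. -/
def shiftMap {A : Type*} (x : ℕ → A) : ℕ → A := fun k => x (k + 1)

/-- `PerSet p x`: positions of `x` that are `p`-periodic towards the future. -/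
def PerSet {A : Type*} (p : ℕ) (x : ℕ → A) : Set ℕ :=
  {k | ∀ ℓ : ℕ, 1 ≤ ℓ → x (k + p * ℓ) = x k}

/-- `D(p)`: relative density of the `p`-periodic positions of `ω` in `[0, p-1]`. -/
noncomputable def skelDensity {A : Type*} (p : ℕ) (ω : ℕ → A) : ℝ :=
  (Set.ncard (PerSet p ω ∩ Set.Iio p) : ℝ) / p

lemma shiftMap_iterate {A : Type*} (ω : ℕ → A) (n k : ℕ) :
    shiftMap^[n] ω k = ω (k + n) := by
  induction n generalizing ω with
  | zero => rfl
  | succ n ih =>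
    rw [Function.iterate_succ_apply, ih (shiftMap ω)]
    rfl

lemma perset_add {A : Type*} {q k : ℕ} {x : ℕ → A} (h : k ∈ PerSet q x) :
    k + q ∈ PerSet q x := by
  intro ℓ hℓ
  have h1 := h (ℓ + 1) (by omega)
  have h2 := h 1 le_rfl
  have e1 : k + q + q * ℓ = k + q * (ℓ + 1) := by ring
  have e2 : k + q = k + q * 1 := by ring
  rw [e1, h1, e2, h2]

lemma perset_add_mul {A : Type*} {q k : ℕ} {x : ℕ → A} (h : k ∈ PerSet q x) (j : ℕ) :
    k + q * j ∈ PerSet q x := by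
  induction j with
  | zero => simpa using h
  | succ j ih =>
    have := perset_add ih
    have e : k + q * j + q = k + q * (j + 1) := by ring
    rwa [e] at this

theorem toeplitz_same_skeleton_density {A : Type*} [Fintype A]
    [TopologicalSpace A] [DiscreteTopology A]
    (ω : ℕ → A)
    (htoe : ∀ k : ℕ, ∃ p : ℕ, 0 < p ∧ k ∈ PerSet p ω)
    (hnp : ¬ ∃ p : ℕ, 0 < p ∧ ∀ k : ℕ, ω (k + p) = ω k)
    (p : ℕ → ℕ) (hpos : ∀ ℓ, 0 < p ℓ) (hdvd : ∀ ℓ, p ℓ ∣ p (ℓ + 1))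
    (hcover : ∀ k : ℕ, ∃ ℓ : ℕ, k ∈ PerSet (p ℓ) ω)
    (ℓ : ℕ) (x y : ℕ → A)
    (hx : x ∈ closure (Set.range fun n : ℕ => shiftMap^[n] ω))
    (hy : y ∈ closure (Set.range fun n : ℕ => shiftMap^[n] ω))
    (hskel₁ : PerSet (p (ℓ + 1)) x = PerSet (p (ℓ + 1)) y)
    (hskel₂ : ∀ k ∈ PerSet (p (ℓ + 1)) x, x k = y k) :
    Filter.limsup
      (fun n : ℕ => (Set.ncard {k : ℕ | k < n ∧ x k ≠ y k} : ℝ) / n)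
      Filter.atTop ≤ 1 - skelDensity (p (ℓ + 1)) ω := by
  classical
  set q : ℕ := p (ℓ + 1) with hqdef
  have hq : 0 < q := hpos (ℓ + 1)
  -- Step 1: approximation by shifts
  have hagree : ∀ M : ℕ, ∃ n : ℕ, ∀ k < M, x k = ω (k + n) := by
    intro M
    have hset : {z : ℕ → A | ∀ k < M, z k = x k} =
        ⋂ k ∈ Finset.range M, (fun z : ℕ → A => z k) ⁻¹' {x k} := by
      ext z; simp [Set.mem_iInter]
    have hopen : IsOpen {z : ℕ → A | ∀ k < M, z k = x k} := by
      rw [hset]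
      exact isOpen_biInter_finset fun k _ =>
        (continuous_apply k).isOpen_preimage _ (isOpen_discrete _)
    obtain ⟨z, hz1, hz2⟩ := (mem_closure_iff.mp hx) _ hopen (fun k _ => rfl)
    obtain ⟨n, rfl⟩ := hz2
    exact ⟨n, fun k hk => (hz1 k hk).symm.trans (shiftMap_iterate ω n k)⟩
  choose n hA using hagree
  -- ceiling block index
  set j0 : ℕ → ℕ := fun M => (n M + q - 1) / q with hj0def
  have hj0 : ∀ M, n M ≤ q * j0 M ∧ q * j0 M < n M + q := by
    intro M
    have h1 := Nat.div_add_mod (n M + q - 1) q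
    have h2 := Nat.mod_lt (n M + q - 1) hq
    simp only [hj0def]
    omega
  set d : ℕ → ℕ := fun M => q * j0 M - n M with hddef
  have hdlt : ∀ M, d M < q := by intro M; have := hj0 M; simp only [hddef]; omega
  -- pigeonhole
  set g : ℕ → Fin q × (Fin (2 * q) → Bool) := fun M =>
    (⟨d M, hdlt M⟩, fun i => decide ((i : ℕ) + n M ∈ PerSet q ω)) with hgdef
  obtain ⟨v, hvinf⟩ := Finite.exists_infinite_fiber g
  have hv : (g ⁻¹' {v}).Infinite := Set.infinite_coe_iff.mp hvinf
  set r : ℕ := (v.1 : ℕ) with hrdef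
  have hr : r < q := v.1.2
  have hpatt : ∀ M ∈ g ⁻¹' {v}, ∀ k (hk : k < 2 * q),
      (k + n M ∈ PerSet q ω ↔ v.2 ⟨k, hk⟩ = true) := by
    intro M hM k hk
    have hgM : g M = v := hM
    have := congrFun (congrArg Prod.snd hgM) ⟨k, hk⟩
    simp only [hgdef] at this
    rw [← this]
    simp
  have hrM : ∀ M ∈ g ⁻¹' {v}, d M = r := by
    intro M hM
    have hgM : g M = v := hM
    have := congrArg Prod.fst hgM
    simp only [hgdef] at this
    rw [hrdef, ← this]
  -- members of the pattern within [0, 2q) are periodic positions of x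
  have key2 : ∀ k (hk : k < 2 * q), v.2 ⟨k, hk⟩ = true → k ∈ PerSet q x := by
    intro k hk hpat m hm
    obtain ⟨M, hM, hMgt⟩ := hv.exists_gt (k + q * m)
    have hω : k + n M ∈ PerSet q ω := (hpatt M hM k hk).mpr hpat
    have e1 : x (k + q * m) = ω (k + q * m + n M) := hA M _ (by omega)
    have e2 : k + q * m + n M = (k + n M) + q * m := by ring
    have e3 : ω ((k + n M) + q * m) = ω (k + n M) := hω m hm
    have e4 : x k = ω (k + n M) := hA M k (by omega)
    rw [e1, e2, e3, ← e4]
  -- window 0 count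
  set c : ℕ := ((Finset.range q).filter (· ∈ PerSet q ω)).card with hcdef
  have key3 : c ≤ ((Finset.Ico r (r + q)).filter (· ∈ PerSet q x)).card := by
    obtain ⟨M, hM⟩ := hv.nonempty
    have hdM := hrM M hM
    have hj0M := hj0 M
    apply Finset.card_le_card_of_injOn (fun k => k + r)
    · intro a ha
      simp only [Finset.mem_coe, Finset.mem_filter, Finset.mem_range] at ha
      simp only [Finset.mem_coe, Finset.mem_filter, Finset.mem_Ico]
      refine ⟨⟨by omega, by omega⟩, ?_⟩
      apply key2 (a + r) (by omega)
      rw [← (hpatt M hM (a + r) (by omega))]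
      have e : a + r + n M = a + q * j0 M := by simp only [hddef] at hdM; omega
      rw [e]
      exact perset_add_mul ha.2 (j0 M)
    · intro a _ b _ h
      simpa using h
  -- all windows
  have key4 : ∀ j : ℕ,
      c ≤ ((Finset.Ico (r + q * j) (r + q * j + q)).filter (· ∈ PerSet q x)).card := by
    intro j
    induction j with
    | zero => simpa using key3
    | succ j ih =>
      refine le_trans ih ?_
      apply Finset.card_le_card_of_injOn (fun k => k + q)
      · intro a ha
        simp only [Finset.mem_coe, Finset.mem_filter, Finset.mem_Ico] at ha ⊢
        have e1 : r + q * (j + 1) = r + q * j + q := by ring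
        exact ⟨⟨by omega, by omega⟩, perset_add ha.2⟩
      · intro a _ b _ h
        simpa using h
  -- count in [0, N)
  have key5 : ∀ N : ℕ, c * ((N - r) / q) ≤
      ((Finset.range N).filter (· ∈ PerSet q x)).card := by
    intro N
    set m : ℕ := (N - r) / q with hmdef
    set S : Finset ℕ := (Finset.range m).biUnion
      (fun j => (Finset.Ico (r + q * j) (r + q * j + q)).filter (· ∈ PerSet q x)) with hSdef
    have hqm : q * m ≤ N - r := by
      rw [hmdef, mul_comm]; exact Nat.div_mul_le_self _ _
    have hsub : S ⊆ (Finset.range N).filter (· ∈ PerSet q x) := by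
      intro k hk
      simp only [hSdef, Finset.mem_biUnion, Finset.mem_filter, Finset.mem_Ico,
        Finset.mem_range] at hk ⊢
      obtain ⟨j, hj, ⟨hk1, hk2⟩, hk3⟩ := hk
      refine ⟨?_, hk3⟩
      have h1 : q * (j + 1) ≤ q * m := Nat.mul_le_mul_left q (by omega)
      have e : q * (j + 1) = q * j + q := by ring
      omega
    have hdisj : ∀ a ∈ Finset.range m, ∀ b ∈ Finset.range m, a ≠ b →
        Disjoint ((Finset.Ico (r + q * a) (r + q * a + q)).filter (· ∈ PerSet q x))
          ((Finset.Ico (r + q * b) (r + q * b + q)).filter (· ∈ PerSet q x)) := by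
      intro a _ b _ hab
      apply Finset.disjoint_left.mpr
      intro k hka hkb
      simp only [Finset.mem_filter, Finset.mem_Ico] at hka hkb
      rcases Nat.lt_or_ge a b with h | h
      · have h1 : q * (a + 1) ≤ q * b := Nat.mul_le_mul_left q (by omega)
        have e : q * (a + 1) = q * a + q := by ring
        omega
      · have h1 : q * (b + 1) ≤ q * a := Nat.mul_le_mul_left q (by omega)
        have e : q * (b + 1) = q * b + q := by ring
        omega
    have hcard : S.card = ∑ j ∈ Finset.range m,
        ((Finset.Ico (r + q * j) (r + q * j + q)).filter (· ∈ PerSet q x)).card :=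
      Finset.card_biUnion hdisj
    have hsum : m * c ≤ S.card := by
      rw [hcard]
      calc m * c = ∑ _j ∈ Finset.range m, c := by
            rw [Finset.sum_const, smul_eq_mul, Finset.card_range]
        _ ≤ _ := Finset.sum_le_sum fun j _ => key4 j
    calc c * ((N - r) / q) = m * c := by rw [hmdef, mul_comm]
      _ ≤ S.card := hsum
      _ ≤ _ := Finset.card_le_card hsub
  -- difference count
  have key6 : ∀ N : ℕ,
      ((Finset.range N).filter (fun k => x k ≠ y k)).card +
        ((Finset.range N).filter (· ∈ PerSet q x)).card ≤ N := by
    intro N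
    have h1 : ((Finset.range N).filter (fun k => x k ≠ y k)) ⊆
        ((Finset.range N).filter (fun k => ¬ (k ∈ PerSet q x))) := by
      intro k hk
      simp only [Finset.mem_filter, Finset.mem_range] at hk ⊢
      exact ⟨hk.1, fun hmem => hk.2 (hskel₂ k hmem)⟩
    have h2 := Finset.card_filter_add_card_filter_not
      (s := Finset.range N) (p := fun k => k ∈ PerSet q x)
    have h3 := Finset.card_le_card h1
    rw [Finset.card_range] at h2
    omega
  -- convert ncards
  have hD : ∀ N : ℕ, (Set.ncard {k : ℕ | k < N ∧ x k ≠ y k} : ℝ) =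
      (((Finset.range N).filter (fun k => x k ≠ y k)).card : ℝ) := by
    intro N
    congr 1
    rw [← Set.ncard_coe_finset]
    congr 1
    ext k
    simp
  have hskelD : skelDensity q ω = (c : ℝ) / q := by
    rw [skelDensity]
    congr 2
    rw [hcdef, ← Set.ncard_coe_finset]
    congr 1
    ext k
    simp [Set.mem_Iio, and_comm]
  -- real analysis
  set K : ℝ := (c : ℝ) * ((r : ℝ) + q) / q with hKdef
  set gfun : ℕ → ℝ := fun N => 1 - (c : ℝ) / q + K / N with hgfdef
  have hqR : (0 : ℝ) < q := by exact_mod_cast hq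
  have hfg : ∀ᶠ N in atTop,
      (Set.ncard {k : ℕ | k < N ∧ x k ≠ y k} : ℝ) / N ≤ gfun N := by
    filter_upwards [eventually_ge_atTop (r + q + 1)] with N hN
    have hNpos : (0 : ℝ) < N := by
      have : 0 < N := by omega
      exact_mod_cast this
    have hNne : (N : ℝ) ≠ 0 := ne_of_gt hNpos
    set m : ℕ := (N - r) / q with hmdef
    set Dn : ℕ := ((Finset.range N).filter (fun k => x k ≠ y k)).card with hDndef
    have hnat1 : Dn + c * m ≤ N := by
      have h5 := key5 N
      have h6 := key6 N
      rw [← hmdef] at h5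
      exact le_trans (Nat.add_le_add_left h5 Dn) h6
    have hnat2 : N ≤ q * m + r + q := by
      have heq := Nat.div_add_mod (N - r) q
      have hlt := Nat.mod_lt (N - r) hq
      rw [hmdef]
      generalize hg : q * ((N - r) / q) = a at heq ⊢
      generalize (N - r) % q = b at heq hlt
      omega
    have hcast1 : (Dn : ℝ) + (c : ℝ) * m ≤ N := by exact_mod_cast hnat1
    have hcast2 : (N : ℝ) ≤ (q : ℝ) * m + r + q := by exact_mod_cast hnat2
    have hmq' : (c : ℝ) / q * ((N : ℝ) - r - q) ≤ (c : ℝ) * m := by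
      rw [div_mul_eq_mul_div, div_le_iff₀ hqR]
      calc (c : ℝ) * ((N : ℝ) - r - q) ≤ (c : ℝ) * ((q : ℝ) * m) :=
            mul_le_mul_of_nonneg_left (by linarith) (Nat.cast_nonneg c)
        _ = (c : ℝ) * m * q := by ring
    have hgN : gfun N * N = (1 - (c : ℝ) / q) * (N : ℝ) + (c : ℝ) / q * ((r : ℝ) + q) := by
      have hKN : K / N * N = K := div_mul_cancel₀ K hNne
      calc gfun N * N = (1 - (c : ℝ) / q) * N + K / N * N := by rw [hgfdef]; ring
        _ = (1 - (c : ℝ) / q) * N + K := by rw [hKN]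
        _ = _ := by rw [hKdef]; ring
    rw [hD N, ← hDndef, div_le_iff₀ hNpos, hgN]
    calc (Dn : ℝ) ≤ (N : ℝ) - (c : ℝ) * m := by linarith
      _ ≤ (N : ℝ) - (c : ℝ) / q * ((N : ℝ) - r - q) := by linarith
      _ = (1 - (c : ℝ) / q) * (N : ℝ) + (c : ℝ) / q * ((r : ℝ) + q) := by ring
  have hgt : Tendsto gfun atTop (nhds (1 - (c : ℝ) / q)) := by
    have h1 := tendsto_const_div_atTop_nhds_zero_nat K
    have h2 : Tendsto (fun _ : ℕ => 1 - (c : ℝ) / q) atTop (nhds (1 - (c : ℝ) / q)) :=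
      tendsto_const_nhds
    simpa [hgfdef] using h2.add h1
  have hbound : IsBoundedUnder (· ≤ ·) atTop gfun := hgt.isBoundedUnder_le
  have hcob : IsCoboundedUnder (· ≤ ·) atTop
      (fun N : ℕ => (Set.ncard {k : ℕ | k < N ∧ x k ≠ y k} : ℝ) / N) := by
    apply Filter.IsBoundedUnder.isCoboundedUnder_le
    refine ⟨0, ?_⟩
    apply eventually_map.mpr
    filter_upwards with N
    positivity
  have hfinal := Filter.limsup_le_limsup hfg hcob hbound
  rw [hgt.limsup_eq] at hfinal
  rw [hskelD]
  exact hfinal
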